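/- Let A be a symmetric positive-definite n×n real matrix and b ∈ ℝⁿ. Starting from any x₀ with residual r₀ = b - Ax₀ and h₀ = r₀, define the conjugate gradient recurrences rᵢ₊₁ = rᵢ - αᵢAhᵢ, hᵢ₊₁ = rᵢ₊₁ + βᵢhᵢ, xᵢ₊₁ = xᵢ + αᵢhᵢ with αᵢ = |rᵢ|²/(hᵢᵀAhᵢ) and βᵢ = |rᵢ₊₁|²/|rᵢ|² (provided the residuals are nonzero). Then the residuals r₀, r₁, ..., rₖ are pairwise orthogonal, and hence some residual rₘ with m ≤ n vanishes, so the exact minimizer of f(x) = c - bᵀx + (1/2)xᵀAx is found in at most n steps. -/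

import Mathlib

open Matrix

/-- Conjugate gradient method. With `A` symmetric positive definite,
residuals `r i = b - A x i`, search directions `h i`, and the CG recurrences (with
step sizes `α i = |r i|²/(h iᵀ A h i)` and `β i = |r (i+1)|²/|r i|²`) holding as long
as the residuals are nonzero: the residuals are pairwise orthogonal, hence some
residual `r m` with `m ≤ n` vanishes, and the corresponding iterate `x m` is the
exact minimizer of `f x = c - bᵀx + (1/2)xᵀAx`. -/
theorem stmt_1 {n : ℕ} (A : Matrix (Fin n) (Fin n) ℝ) (hAsymm : A.IsSymm)
    (hApos : A.PosDef) (b : Fin n → ℝ) (c : ℝ)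
    (r h x : ℕ → Fin n → ℝ)
    (hr0 : r 0 = b - A.mulVec (x 0))
    (hh0 : h 0 = r 0)
    (hrec : ∀ i : ℕ, r i ≠ 0 →
      r (i + 1) = r i - ((r i ⬝ᵥ r i) / (h i ⬝ᵥ A.mulVec (h i))) • A.mulVec (h i) ∧
      h (i + 1) = r (i + 1) + ((r (i + 1) ⬝ᵥ r (i + 1)) / (r i ⬝ᵥ r i)) • h i ∧
      x (i + 1) = x i + ((r i ⬝ᵥ r i) / (h i ⬝ᵥ A.mulVec (h i))) • h i) :
    (∀ i j : ℕ, i < j → (∀ k, k ≤ j → r k ≠ 0) → r i ⬝ᵥ r j = 0) ∧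
    ∃ m : ℕ, m ≤ n ∧ r m = 0 ∧
      ∀ y : Fin n → ℝ,
        c - b ⬝ᵥ x m + (1 / 2) * (x m ⬝ᵥ A.mulVec (x m)) ≤
          c - b ⬝ᵥ y + (1 / 2) * (y ⬝ᵥ A.mulVec y) := by
  classical
  have hpos : ∀ v : Fin n → ℝ, v ≠ 0 → 0 < v ⬝ᵥ A.mulVec v := fun v hv => by
    simpa using hApos.dotProduct_mulVec_pos hv
  have hsym : ∀ u v : Fin n → ℝ, u ⬝ᵥ A.mulVec v = v ⬝ᵥ A.mulVec u := fun u v => by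
    rw [dotProduct_mulVec, ← mulVec_transpose, hAsymm.eq, dotProduct_comm]
  have hdot_ne : ∀ v : Fin n → ℝ, v ≠ 0 → v ⬝ᵥ v ≠ 0 := fun v hv => by simpa using hv
  -- The main invariant, proved by induction.
  have main : ∀ j : ℕ, (∀ k, k ≤ j → r k ≠ 0) →
      (∀ i i', i < i' → i' ≤ j → r i ⬝ᵥ r i' = 0) ∧
      (∀ i i', i ≤ j → i' ≤ j → i ≠ i' → h i ⬝ᵥ A.mulVec (h i') = 0) ∧
      (∀ i i', i < i' → i' ≤ j → h i ⬝ᵥ r i' = 0) ∧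
      (∀ i, i ≤ j → h i ⬝ᵥ r i = r i ⬝ᵥ r i) := by
    intro j
    induction j with
    | zero =>
      intro _
      refine ⟨?_, ?_, ?_, ?_⟩
      · intro i i' hii' hi'; omega
      · intro i i' hi hi' hne; omega
      · intro i i' hii' hi'; omega
      · intro i hi
        obtain rfl := Nat.le_zero.mp hi
        rw [hh0]
    | succ j IH =>
      intro hne
      have hnej : ∀ k, k ≤ j → r k ≠ 0 := fun k hk => hne k (hk.trans (Nat.le_succ j))
      obtain ⟨o, cnj, hro, hrr⟩ := IH hnej
      have rjne := hnej j le_rfl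
      have rrj_ne : r j ⬝ᵥ r j ≠ 0 := hdot_ne _ rjne
      obtain ⟨e1, e2, -⟩ := hrec j rjne
      have hj_r : h j ⬝ᵥ r j = r j ⬝ᵥ r j := hrr j le_rfl
      have hjne' : h j ≠ 0 := by
        intro h0; rw [h0, zero_dotProduct] at hj_r; exact rrj_ne hj_r.symm
      have hAh : 0 < h j ⬝ᵥ A.mulVec (h j) := hpos _ hjne'
      have hkne : ∀ k, k ≤ j → h k ≠ 0 := by
        intro k hk h0
        have hrrk := hrr k hk
        rw [h0, zero_dotProduct] at hrrk
        exact hdot_ne _ (hnej k hk) hrrk.symm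
      have hAhk : ∀ k, k ≤ j → 0 < h k ⬝ᵥ A.mulVec (h k) := fun k hk => hpos _ (hkne k hk)
      -- r i ⬝ A h j = 0 for i < j
      have rAh_lt : ∀ i, i < j → r i ⬝ᵥ A.mulVec (h j) = 0 := by
        intro i hij
        cases i with
        | zero =>
          rw [← hh0]
          exact cnj 0 j (Nat.zero_le j) le_rfl (by omega)
        | succ k =>
          obtain ⟨-, ek, -⟩ := hrec k (hnej k (by omega))
          rw [show r (k+1) = h (k+1) - ((r (k+1) ⬝ᵥ r (k+1)) / (r k ⬝ᵥ r k)) • h k from by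
              rw [ek, add_sub_cancel_right],
            sub_dotProduct, smul_dotProduct, cnj (k+1) j (by omega) le_rfl (by omega),
            cnj k j (by omega) le_rfl (by omega)]
          simp
      -- r j ⬝ A h j = h j ⬝ A h j
      have rAh_j : r j ⬝ᵥ A.mulVec (h j) = h j ⬝ᵥ A.mulVec (h j) := by
        cases j with
        | zero => rw [hh0]
        | succ k =>
          obtain ⟨-, ek, -⟩ := hrec k (hnej k (by omega))
          rw [show r (k+1) = h (k+1) - ((r (k+1) ⬝ᵥ r (k+1)) / (r k ⬝ᵥ r k)) • h k from by
              rw [ek, add_sub_cancel_right],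
            sub_dotProduct, smul_dotProduct, cnj k (k+1) (by omega) le_rfl (by omega)]
          simp
      -- new residual orthogonality
      have N1 : ∀ i, i < j + 1 → r i ⬝ᵥ r (j+1) = 0 := by
        intro i hij
        rw [e1, dotProduct_sub, dotProduct_smul, smul_eq_mul]
        rcases Nat.lt_succ_iff_lt_or_eq.mp hij with hlt | heq
        · rw [o i j hlt le_rfl, rAh_lt i hlt]; ring
        · subst heq
          rw [rAh_j, div_mul_cancel₀ _ hAh.ne', sub_self]
      -- h i ⟂ r (j+1)
      have N3 : ∀ i, i ≤ j → h i ⬝ᵥ r (j+1) = 0 := by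
        intro i hij
        rw [e1, dotProduct_sub, dotProduct_smul, smul_eq_mul]
        rcases eq_or_lt_of_le hij with heq | hlt
        · subst heq
          rw [hj_r, div_mul_cancel₀ _ hAh.ne', sub_self]
        · rw [hro i j hlt le_rfl, cnj i j hlt.le le_rfl (Nat.ne_of_lt hlt)]; ring
      have N4 : h (j+1) ⬝ᵥ r (j+1) = r (j+1) ⬝ᵥ r (j+1) := by
        rw [e2, add_dotProduct, smul_dotProduct, N3 j le_rfl, smul_eq_mul, mul_zero, add_zero]
      -- key identity for conjugacy
      have key : ∀ i, i ≤ j →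
          (r i ⬝ᵥ r i) / (h i ⬝ᵥ A.mulVec (h i)) * (r (j+1) ⬝ᵥ A.mulVec (h i))
            = r (j+1) ⬝ᵥ r i - r (j+1) ⬝ᵥ r (i+1) := by
        intro i hij
        obtain ⟨ei, -, -⟩ := hrec i (hnej i hij)
        have hsm : ((r i ⬝ᵥ r i) / (h i ⬝ᵥ A.mulVec (h i))) • A.mulVec (h i)
            = r i - r (i+1) := by
          rw [ei, sub_sub_cancel]
        calc (r i ⬝ᵥ r i) / (h i ⬝ᵥ A.mulVec (h i)) * (r (j+1) ⬝ᵥ A.mulVec (h i))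
            = r (j+1) ⬝ᵥ (((r i ⬝ᵥ r i) / (h i ⬝ᵥ A.mulVec (h i))) • A.mulVec (h i)) := by
              rw [dotProduct_smul, smul_eq_mul]
          _ = r (j+1) ⬝ᵥ (r i - r (i+1)) := by rw [hsm]
          _ = r (j+1) ⬝ᵥ r i - r (j+1) ⬝ᵥ r (i+1) := dotProduct_sub _ _ _
      -- conjugacy of h (j+1) with earlier directions
      have N2 : ∀ i, i ≤ j → h i ⬝ᵥ A.mulVec (h (j+1)) = 0 := by
        intro i hij
        have hri : r i ⬝ᵥ r i ≠ 0 := hdot_ne _ (hnej i hij)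
        have hAi : 0 < h i ⬝ᵥ A.mulVec (h i) := hAhk i hij
        have d1 : r (j+1) ⬝ᵥ r i = 0 := by rw [dotProduct_comm]; exact N1 i (by omega)
        have hk := key i hij
        rw [e2, mulVec_add, mulVec_smul, dotProduct_add, dotProduct_smul, smul_eq_mul,
          hsym (h i) (r (j+1))]
        rcases eq_or_lt_of_le hij with heq | hlt
        · subst heq
          rw [d1, zero_sub] at hk
          field_simp at hk ⊢
          nlinarith [hk]
        · have d2 : r (j+1) ⬝ᵥ r (i+1) = 0 := by rw [dotProduct_comm]; exact N1 (i+1) (by omega)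
          rw [d1, d2, sub_zero] at hk
          have hX : r (j+1) ⬝ᵥ A.mulVec (h i) = 0 := by
            rcases mul_eq_zero.mp hk with h' | h'
            · exact absurd h' (div_ne_zero hri hAi.ne')
            · exact h'
          rw [hX, cnj i j hlt.le le_rfl (Nat.ne_of_lt hlt), mul_zero, add_zero]
      refine ⟨?_, ?_, ?_, ?_⟩
      · intro i i' hii' hi'
        rcases eq_or_lt_of_le hi' with heq | hlt
        · subst heq; exact N1 i hii'
        · exact o i i' hii' (by omega)
      · intro i i' hi hi' hnei
        rcases eq_or_lt_of_le hi' with heq | h1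
        · subst heq; exact N2 i (by omega)
        · rcases eq_or_lt_of_le hi with heq | h2
          · subst heq
            rw [hsym]
            exact N2 i' (by omega)
          · exact cnj i i' (by omega) (by omega) hnei
      · intro i i' hii' hi'
        rcases eq_or_lt_of_le hi' with heq | h1
        · subst heq; exact N3 i (by omega)
        · exact hro i i' hii' (by omega)
      · intro i hi
        rcases eq_or_lt_of_le hi with heq | h1
        · subst heq; exact N4
        · exact hrr i (by omega)
  have ortho : ∀ i j : ℕ, i < j → (∀ k, k ≤ j → r k ≠ 0) → r i ⬝ᵥ r j = 0 := by
    intro i j hij hk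
    exact (main j hk).1 i j hij le_rfl
  refine ⟨ortho, ?_⟩
  -- some residual with index ≤ n vanishes
  have hex : ∃ m, m ≤ n ∧ r m = 0 := by
    by_contra hcon
    push_neg at hcon
    have hk : ∀ k, k ≤ n → r k ≠ 0 := hcon
    have hperp : ∀ i i' : Fin (n+1), i ≠ i' → r i ⬝ᵥ r i' = 0 := by
      intro i i' hne'
      rcases lt_or_gt_of_ne (fun hc => hne' (Fin.ext hc) : (i : ℕ) ≠ (i' : ℕ)) with hlt | hgt
      · exact ortho i i' hlt (fun k hk' => hk k (by omega))
      · rw [dotProduct_comm]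
        exact ortho i' i hgt (fun k hk' => hk k (by omega))
    have hli : LinearIndependent ℝ (fun i : Fin (n+1) => r i) := by
      rw [Fintype.linearIndependent_iff]
      intro g hg i
      have hgi : (∑ j, g j • r j) ⬝ᵥ r i = 0 := by rw [hg, zero_dotProduct]
      have hsum : (∑ j, g j • r j) ⬝ᵥ r i = ∑ j, g j * (r j ⬝ᵥ r i) := by
        simp [dotProduct, Finset.sum_mul, Finset.mul_sum, mul_assoc]
        rw [Finset.sum_comm]
      rw [hsum, Finset.sum_eq_single i] at hgi
      · have hri : r i ⬝ᵥ r i ≠ 0 := hdot_ne _ (hk i (by omega))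
        rcases mul_eq_zero.mp hgi with h' | h'
        · exact h'
        · exact absurd h' hri
      · intro j _ hji
        rw [hperp j i hji, mul_zero]
      · intro hcon'; exact absurd (Finset.mem_univ i) hcon'
    have hcard := hli.fintype_card_le_finrank
    simp [Module.finrank_fin_fun] at hcard
  obtain ⟨m₀, hm₀n, hm₀⟩ := hex
  have hexP : ∃ m, r m = 0 := ⟨m₀, hm₀⟩
  refine ⟨Nat.find hexP, le_trans (Nat.find_le hm₀) hm₀n, Nat.find_spec hexP, ?_⟩
  set m := Nat.find hexP with hmdef
  have hrm : r m = 0 := Nat.find_spec hexP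
  have hmin : ∀ k, k < m → r k ≠ 0 := fun k hk => Nat.find_min hexP hk
  -- the residual formula holds up to the first vanishing residual
  have hres : ∀ k : ℕ, (∀ j, j < k → r j ≠ 0) → r k = b - A.mulVec (x k) := by
    intro k
    induction k with
    | zero => intro _; exact hr0
    | succ k IHk =>
      intro hk
      have hrk := hk k (Nat.lt_succ_self k)
      obtain ⟨e1, -, e3⟩ := hrec k hrk
      rw [e1, e3, mulVec_add, mulVec_smul, sub_add_eq_sub_sub,
        IHk (fun j hj => hk j (hj.trans (Nat.lt_succ_self k)))]
  have hAx : A.mulVec (x m) = b := by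
    have hbm : b - A.mulVec (x m) = 0 := by rw [← hres m hmin, hrm]
    exact (sub_eq_zero.mp hbm).symm
  intro y
  have hd : 0 ≤ (y - x m) ⬝ᵥ A.mulVec (y - x m) := by
    rcases eq_or_ne (y - x m) 0 with h0 | h0
    · rw [h0]; simp
    · exact (hpos _ h0).le
  have expand : (y - x m) ⬝ᵥ A.mulVec (y - x m)
      = y ⬝ᵥ A.mulVec y - 2 * (x m ⬝ᵥ A.mulVec y) + x m ⬝ᵥ A.mulVec (x m) := by
    rw [Matrix.mulVec_sub, sub_dotProduct, dotProduct_sub, dotProduct_sub, hsym y (x m)]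
    ring
  have hb1 : b ⬝ᵥ y = x m ⬝ᵥ A.mulVec y := by
    rw [← hAx, dotProduct_comm, hsym y (x m)]
  have hb2 : b ⬝ᵥ x m = x m ⬝ᵥ A.mulVec (x m) := by
    rw [← hAx, dotProduct_comm]
  rw [expand] at hd
  rw [hb1, hb2]
  linarith
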